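/- Let (Ω, 𝔉, P) be a probability space, let X and W be measurable spaces, and let (h_{(x,w)})_{(x,w)∈X×W} be a centered Gaussian process on Ω with product covariance function E[h_{(x,w)}·h_{(x′,w′)}] = k_X(x, x′)·k_W(w, w′), such that each h_{(x,w)} ∈ L²(Ω, P) and for each x the map w ↦ h_{(x,w)} ∈ L²(Ω, P) is strongly measurable. Let (ν_{x,z})_{(x,z)∈X×Z} be a family of finite measures on W such that for each (x, z) the map w ↦ h_{(x,w)} is Bochner integrable in L²(Ω, P) with respect to ν_{x,z}, and define g_{(x,z)} = ∫ h_{(x,w)} dν_{x,z}(w) (Bochner integral in L²(Ω, P)). Then (g_{(x,z)}) is a centered Gaussian process with covariance function q((x, z), (x′, z′)) = k_X(x, x′) · ∬ k_W(w, w′) dν_{x,z}(w) dν_{x′,z′}(w′). -/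

import Mathlib

open MeasureTheory ProbabilityTheory Filter Set Real
open scoped NNReal ENNReal Topology RealInnerProductSpace
set_option synthInstance.maxHeartbeats 1000000
set_option maxHeartbeats 1000000

/-- Second moment of a centered real Gaussian measure. -/
lemma integral_sq_gaussianReal (v : ℝ≥0) :
    ∫ x, x ^ 2 ∂(gaussianReal 0 v) = (v : ℝ) := by
  by_cases hv : v = 0
  · simp [hv, integral_dirac]
  · rw [gaussianReal_of_var_ne_zero 0 hv]
    have hvpos : (0:ℝ) < (v:ℝ) := lt_of_le_of_ne v.2 (by exact_mod_cast Ne.symm hv)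
    have h1 : ∫ x, x ^ 2 ∂((volume : Measure ℝ).withDensity (gaussianPDF 0 v))
        = ∫ x, gaussianPDFReal 0 v x * x ^ 2 := by
      have hrw : (gaussianPDF 0 v) = fun x => ((gaussianPDFReal 0 v x).toNNReal : ℝ≥0∞) := rfl
      rw [hrw, integral_withDensity_eq_integral_smul
        (by exact (measurable_gaussianPDFReal 0 v).real_toNNReal) (fun x => x ^ 2)]
      refine integral_congr_ae (Eventually.of_forall fun x => ?_)
      simp [NNReal.smul_def, Real.coe_toNNReal _ (gaussianPDFReal_nonneg 0 v x)]
    rw [h1]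
    set b : ℝ := (2 * (v:ℝ))⁻¹ with hbdef
    have hb : 0 < b := by positivity
    have h2 : ∀ x : ℝ, gaussianPDFReal 0 v x * x ^ 2
        = (√(2 * π * v))⁻¹ * (x ^ 2 * rexp (-b * x ^ 2)) := by
      intro x
      have harg : -(x - 0) ^ 2 / (2 * (v:ℝ)) = -b * x ^ 2 := by
        rw [hbdef]; field_simp; ring
      rw [gaussianPDFReal, harg]; ring
    simp_rw [h2]
    rw [integral_const_mul]
    have h3 : ∫ x : ℝ, x ^ 2 * rexp (-b * x ^ 2)
        = 2 * ∫ x in Ioi (0:ℝ), x ^ 2 * rexp (-b * x ^ 2) := by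
      rw [← integral_comp_abs (f := fun x => x ^ 2 * rexp (-b * x ^ 2))]
      simp [sq_abs]
    have h4 : ∫ x in Ioi (0:ℝ), x ^ 2 * rexp (-b * x ^ 2)
        = b ^ (-(3:ℝ)/2) * (1/2) * Real.Gamma (3/2) := by
      have h := integral_rpow_mul_exp_neg_mul_rpow (p := 2) (q := 2) (b := b)
        two_pos (by norm_num) hb
      have heq : ∫ x in Ioi (0:ℝ), x ^ (2:ℝ) * rexp (-b * x ^ (2:ℝ))
          = ∫ x in Ioi (0:ℝ), x ^ 2 * rexp (-b * x ^ 2) := by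
        refine setIntegral_congr_fun measurableSet_Ioi (fun x hx => ?_)
        rw [show (2:ℝ) = ((2:ℕ):ℝ) by norm_num, Real.rpow_natCast]
      rw [heq] at h
      rw [h]; norm_num
    have h5 : Real.Gamma (3/2) = √π / 2 := by
      rw [show (3:ℝ)/2 = 1/2 + 1 by norm_num, Real.Gamma_add_one (by norm_num),
        Real.Gamma_one_half_eq]; ring
    rw [h3, h4, h5]
    have hb32 : b ^ (-(3:ℝ)/2) = (2 * (v:ℝ)) * √(2 * (v:ℝ)) := by
      rw [hbdef, Real.inv_rpow (by positivity), show (-(3:ℝ)/2) = -((3:ℝ)/2) by norm_num,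
        Real.rpow_neg (by positivity), inv_inv, show (3:ℝ)/2 = 1 + 1/2 by norm_num,
        Real.rpow_add (by positivity), Real.rpow_one, ← Real.sqrt_eq_rpow]
    have hsq : √(2 * π * (v:ℝ)) = √(2 * (v:ℝ)) * √π := by
      rw [show 2 * π * (v:ℝ) = (2 * (v:ℝ)) * π by ring, Real.sqrt_mul (by positivity)]
    rw [hb32, hsq]
    have s1 : 0 < √(2 * (v:ℝ)) := Real.sqrt_pos.2 (by positivity)
    have s2 : 0 < √π := Real.sqrt_pos.2 pi_pos
    field_simp

/-- Continuity of the Gaussian cdf in both the variance and the endpoint. -/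
lemma tendsto_gaussianReal_Iic {v : ℝ≥0} (hv : v ≠ 0) {vk : ℕ → ℝ≥0} {yk : ℕ → ℝ} {y : ℝ}
    (hvk : Tendsto vk atTop (𝓝 v)) (hyk : Tendsto yk atTop (𝓝 y)) :
    Tendsto (fun k => gaussianReal 0 (vk k) (Iic (yk k))) atTop
      (𝓝 (gaussianReal 0 v (Iic y))) := by
  have hvpos : (0:ℝ) < (v:ℝ) := lt_of_le_of_ne v.2 (by exact_mod_cast Ne.symm hv)
  have hvk' : Tendsto (fun k => ((vk k : ℝ))) atTop (𝓝 (v:ℝ)) := NNReal.tendsto_coe.mpr hvk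
  have hlo : ∀ᶠ k in atTop, (v:ℝ)/2 < (vk k : ℝ) :=
    hvk'.eventually (eventually_gt_nhds (by linarith))
  have hhi : ∀ᶠ k in atTop, (vk k : ℝ) < 2*(v:ℝ) :=
    hvk'.eventually (eventually_lt_nhds (by linarith))
  have key : Tendsto (fun k => ∫ x, (Iic (yk k)).indicator (gaussianPDFReal 0 (vk k)) x)
      atTop (𝓝 (∫ x, (Iic y).indicator (gaussianPDFReal 0 v) x)) := by
    refine tendsto_integral_filter_of_dominated_convergence
      (fun x => (√(π * (v:ℝ)))⁻¹ * rexp (-(4*(v:ℝ))⁻¹ * x ^ 2)) ?_ ?_ ?_ ?_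
    · exact Eventually.of_forall fun k =>
        ((stronglyMeasurable_gaussianPDFReal 0 (vk k)).indicator
          measurableSet_Iic).aestronglyMeasurable
    · filter_upwards [hlo, hhi] with k hk1 hk2
      refine Eventually.of_forall fun x => ?_
      rw [Real.norm_eq_abs,
        abs_of_nonneg (Set.indicator_nonneg (fun a _ => gaussianPDFReal_nonneg _ _ a) x)]
      have hkpos : (0:ℝ) < (vk k : ℝ) := by linarith
      have hpdf : gaussianPDFReal 0 (vk k) x
          ≤ (√(π * (v:ℝ)))⁻¹ * rexp (-(4*(v:ℝ))⁻¹ * x ^ 2) := by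
        rw [gaussianPDFReal]
        refine mul_le_mul ?_ ?_ (Real.exp_pos _).le (by positivity)
        · refine inv_anti₀ (Real.sqrt_pos.2 (by positivity)) ?_
          refine Real.sqrt_le_sqrt ?_
          nlinarith [pi_pos]
        · rw [Real.exp_le_exp, sub_zero, neg_div, neg_mul, neg_le_neg_iff, inv_mul_eq_div,
            div_le_div_iff₀ (by linarith) (by linarith)]
          nlinarith [sq_nonneg x]
      by_cases hx : x ∈ Iic (yk k)
      · rw [Set.indicator_of_mem hx]; exact hpdf
      · rw [Set.indicator_of_notMem hx]; positivity
    · exact (integrable_exp_neg_mul_sq (by positivity)).const_mul _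
    · have hae : ∀ᵐ x : ℝ, x ≠ y := by
        rw [ae_iff]
        have hset : {x : ℝ | ¬ x ≠ y} = {y} := by ext x; simp
        rw [hset]; exact measure_singleton y
      filter_upwards [hae] with x hx
      have hcont : Tendsto (fun k => gaussianPDFReal 0 (vk k) x) atTop
          (𝓝 (gaussianPDFReal 0 v x)) := by
        have hC : ContinuousAt (fun t : ℝ => (√(2 * π * t))⁻¹ * rexp (-(x - 0) ^ 2 / (2 * t)))
            (v : ℝ) := by
          have h1 : ContinuousAt (fun t : ℝ => (√(2 * π * t))⁻¹) (v:ℝ) := by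
            refine ContinuousAt.inv₀ ?_ (by positivity)
            exact ((continuous_const.mul continuous_id).sqrt).continuousAt
          have h2 : ContinuousAt (fun t : ℝ => rexp (-(x - 0) ^ 2 / (2 * t))) (v:ℝ) := by
            refine Real.continuous_exp.continuousAt.comp ?_
            exact (continuousAt_const.div ((continuous_const.mul continuous_id).continuousAt)
              (by positivity))
          exact h1.mul h2
        have := hC.tendsto.comp hvk'
        simpa only [Function.comp_def, gaussianPDFReal] using this
      rcases lt_or_gt_of_ne hx with hlt | hgt
      · have hev : ∀ᶠ k in atTop, x ∈ Iic (yk k) := by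
          filter_upwards [hyk.eventually (eventually_gt_nhds hlt)] with k hk
          exact le_of_lt hk
        have hmem : (Iic y).indicator (gaussianPDFReal 0 v) x = gaussianPDFReal 0 v x :=
          Set.indicator_of_mem (show x ∈ Iic y from le_of_lt hlt) _
        rw [hmem]
        refine hcont.congr' ?_
        filter_upwards [hev] with k hk
        exact (Set.indicator_of_mem hk _).symm
      · have hev : ∀ᶠ k in atTop, x ∉ Iic (yk k) := by
          filter_upwards [hyk.eventually (eventually_lt_nhds hgt)] with k hk
          exact not_le.2 hk
        have hmem : (Iic y).indicator (gaussianPDFReal 0 v) x = 0 :=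
          Set.indicator_of_notMem (show x ∉ Iic y from not_le.2 hgt) _
        rw [hmem]
        refine tendsto_const_nhds.congr' ?_
        filter_upwards [hev] with k hk
        exact (Set.indicator_of_notMem hk _).symm
  have htarget : gaussianReal 0 v (Iic y)
      = ENNReal.ofReal (∫ x, (Iic y).indicator (gaussianPDFReal 0 v) x) := by
    rw [gaussianReal_apply_eq_integral 0 hv, integral_indicator measurableSet_Iic]
  rw [htarget]
  have hof := (ENNReal.continuous_ofReal.tendsto _).comp key
  refine hof.congr' ?_
  filter_upwards [hlo] with k hk
  have hk0 : vk k ≠ 0 := by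
    intro h0
    rw [h0] at hk
    simp at hk
    linarith
  rw [Function.comp_apply, gaussianReal_apply_eq_integral 0 hk0,
    integral_indicator measurableSet_Iic]

/-- If an `L²` random variable has a centered Gaussian law, the variance is its squared norm. -/
lemma norm_sq_eq_of_map_gaussian {Ω : Type*} [MeasurableSpace Ω] {P : Measure Ω}
    (f : Lp ℝ 2 P) {v : ℝ≥0}
    (hf : P.map ⇑f = gaussianReal 0 v) : (v : ℝ) = ‖f‖ ^ 2 := by
  have h1 : ‖f‖ ^ 2 = ⟪f, f⟫ := (real_inner_self_eq_norm_sq f).symm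
  have h2 : ⟪f, f⟫ = ∫ ω, f ω * f ω ∂P := by
    rw [L2.inner_def]
    exact integral_congr_ae (Eventually.of_forall fun ω => by
      simp [RCLike.inner_apply]; ring)
  have h3 : ∫ ω, f ω * f ω ∂P = ∫ x, x ^ 2 ∂(P.map ⇑f) := by
    rw [integral_map (Lp.aestronglyMeasurable f).aemeasurable
      (by exact (measurable_id.pow_const 2).aestronglyMeasurable)]
    exact integral_congr_ae (Eventually.of_forall fun ω => (sq (f ω)).symm)
  rw [h1, h2, h3, hf, integral_sq_gaussianReal]

/-- An `L²` limit of centered Gaussian random variables is a centered Gaussian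
random variable. -/
lemma gaussian_of_tendsto {Ω : Type*} [MeasurableSpace Ω] {P : Measure Ω}
    [IsProbabilityMeasure P] (u : ℕ → Lp ℝ 2 P) (f : Lp ℝ 2 P)
    (hu : ∀ k, ∃ v : ℝ≥0, P.map ⇑(u k) = gaussianReal 0 v)
    (hconv : Tendsto u atTop (𝓝 f)) :
    ∃ v : ℝ≥0, P.map ⇑f = gaussianReal 0 v := by
  choose vf hvf using hu
  have hveq : ∀ k, ((vf k : ℝ)) = ‖u k‖ ^ 2 := fun k => norm_sq_eq_of_map_gaussian _ (hvf k)
  set v : ℝ≥0 := ‖f‖₊ ^ 2 with hvdef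
  have hvtend : Tendsto vf atTop (𝓝 v) := by
    rw [← NNReal.tendsto_coe]
    have : Tendsto (fun k => ‖u k‖ ^ 2) atTop (𝓝 (‖f‖ ^ 2)) :=
      ((continuous_norm.tendsto f).comp hconv).pow 2
    simpa only [hveq, hvdef, NNReal.coe_pow, coe_nnnorm] using this
  by_cases hv : v = 0
  · refine ⟨0, ?_⟩
    have hf0 : f = 0 := by
      have : ‖f‖₊ = 0 := by
        simpa [hvdef, pow_eq_zero_iff] using hv
      simpa [nnnorm_eq_zero] using this
    rw [hf0, Measure.map_congr (Lp.coeFn_zero ℝ 2 P)]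
    simp only [gaussianReal_zero_var]
    rw [show (0 : Ω → ℝ) = fun _ => (0:ℝ) from rfl, Measure.map_const]
    simp
  · refine ⟨v, ?_⟩
    haveI : IsProbabilityMeasure (P.map ⇑f) :=
      Measure.isProbabilityMeasure_map (Lp.aestronglyMeasurable f).aemeasurable
    have htm : TendstoInMeasure P (fun k => ⇑(u k)) atTop ⇑f := by
      refine tendstoInMeasure_of_tendsto_eLpNorm_of_ne_top (p := 2) (by norm_num) (by norm_num)
        (fun k => Lp.aestronglyMeasurable _) (Lp.aestronglyMeasurable _) ?_
      have heq : ∀ k, eLpNorm (⇑(u k) - ⇑f) 2 P = (‖u k - f‖₊ : ℝ≥0∞) := by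
        intro k
        rw [eLpNorm_congr_ae (Lp.coeFn_sub (u k) f).symm]
        rw [Lp.nnnorm_def, ENNReal.coe_toNNReal (Lp.eLpNorm_ne_top _)]
      simp_rw [heq]
      rw [← ENNReal.coe_zero, ENNReal.tendsto_coe]
      have hsub : Tendsto (fun k => u k - f) atTop (𝓝 0) := by
        have h := hconv.sub (tendsto_const_nhds (x := f))
        rwa [sub_self] at h
      have := (continuous_nnnorm.tendsto (0 : Lp ℝ 2 P)).comp hsub
      simpa [Function.comp_def] using this
    refine Measure.ext_of_Iic (P.map ⇑f) (gaussianReal 0 v) (fun y => ?_)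
    set A := P.map ⇑f (Iic y) with hA
    have hmapA : A = P (⇑f ⁻¹' Iic y) :=
      Measure.map_apply_of_aemeasurable (Lp.aestronglyMeasurable f).aemeasurable measurableSet_Iic
    have hmapk : ∀ k (c : ℝ), gaussianReal 0 (vf k) (Iic c) = P (⇑(u k) ⁻¹' Iic c) := by
      intro k c
      rw [← hvf k, Measure.map_apply_of_aemeasurable
        (Lp.aestronglyMeasurable _).aemeasurable measurableSet_Iic]
    have key : ∀ ε : ℝ, 0 < ε →
        gaussianReal 0 v (Iic (y - ε)) ≤ A ∧ A ≤ gaussianReal 0 v (Iic (y + ε)) := by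
      intro ε hε
      have hδ := tendstoInMeasure_iff_dist.1 htm ε hε
      constructor
      · have hineq : ∀ k, gaussianReal 0 (vf k) (Iic (y - ε))
            ≤ A + P {x | ε ≤ dist (u k x) (f x)} := by
          intro k
          rw [hmapk, hmapA]
          refine le_trans (measure_mono ?_) (measure_union_le _ _)
          intro ω hω
          simp only [mem_preimage, mem_Iic] at hω
          by_cases hd : ε ≤ dist (u k ω) (f ω)
          · exact Or.inr hd
          · push_neg at hd
            rw [Real.dist_eq] at hd
            left
            simp only [mem_preimage, mem_Iic]
            have habs := abs_lt.1 hd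
            linarith [habs.1, habs.2]
        have hL : Tendsto (fun k => gaussianReal 0 (vf k) (Iic (y - ε))) atTop
            (𝓝 (gaussianReal 0 v (Iic (y - ε)))) :=
          tendsto_gaussianReal_Iic hv hvtend tendsto_const_nhds
        have hR : Tendsto (fun k => A + P {x | ε ≤ dist (u k x) (f x)}) atTop (𝓝 (A + 0)) :=
          tendsto_const_nhds.add hδ
        rw [add_zero] at hR
        exact le_of_tendsto_of_tendsto' hL hR hineq
      · have hineq : ∀ k, A ≤ gaussianReal 0 (vf k) (Iic (y + ε))
            + P {x | ε ≤ dist (u k x) (f x)} := by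
          intro k
          rw [hmapk, hmapA]
          refine le_trans (measure_mono ?_) (measure_union_le _ _)
          intro ω hω
          simp only [mem_preimage, mem_Iic] at hω
          by_cases hd : ε ≤ dist (u k ω) (f ω)
          · exact Or.inr hd
          · push_neg at hd
            rw [Real.dist_eq] at hd
            left
            simp only [mem_preimage, mem_Iic]
            have habs := abs_lt.1 hd
            linarith [habs.1, habs.2]
        have hR : Tendsto (fun k => gaussianReal 0 (vf k) (Iic (y + ε))
            + P {x | ε ≤ dist (u k x) (f x)}) atTop (𝓝 (gaussianReal 0 v (Iic (y + ε)) + 0)) :=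
          (tendsto_gaussianReal_Iic hv hvtend tendsto_const_nhds).add hδ
        rw [add_zero] at hR
        exact le_of_tendsto_of_tendsto' tendsto_const_nhds hR (fun k => hineq k)
    have heps : Tendsto (fun k : ℕ => 1 / ((k:ℝ) + 1)) atTop (𝓝 0) :=
      tendsto_one_div_add_atTop_nhds_zero_nat
    have hlower : Tendsto (fun k : ℕ => gaussianReal 0 v (Iic (y - 1 / ((k:ℝ) + 1)))) atTop
        (𝓝 (gaussianReal 0 v (Iic y))) := by
      refine tendsto_gaussianReal_Iic hv tendsto_const_nhds ?_
      simpa using tendsto_const_nhds.sub heps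
    have hupper : Tendsto (fun k : ℕ => gaussianReal 0 v (Iic (y + 1 / ((k:ℝ) + 1)))) atTop
        (𝓝 (gaussianReal 0 v (Iic y))) := by
      refine tendsto_gaussianReal_Iic hv tendsto_const_nhds ?_
      simpa using tendsto_const_nhds.add heps
    have hposk : ∀ k : ℕ, (0:ℝ) < 1 / ((k:ℝ) + 1) := fun k => by positivity
    refine le_antisymm ?_ ?_
    · exact le_of_tendsto_of_tendsto' tendsto_const_nhds hupper (fun k => (key _ (hposk k)).2)
    · exact le_of_tendsto_of_tendsto' hlower tendsto_const_nhds (fun k => (key _ (hposk k)).1)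

/-- The coercion of a finite linear combination in `L²` is a.e. the pointwise combination. -/
lemma coeFn_sum_smul {Ω : Type*} [MeasurableSpace Ω] {P : Measure Ω} {ι : Type*}
    (s : Finset ι) (a : ι → ℝ) (F : ι → Lp ℝ 2 P) :
    ⇑(∑ i ∈ s, a i • F i) =ᵐ[P] fun ω => ∑ i ∈ s, a i * F i ω := by
  induction s using Finset.cons_induction with
  | empty =>
    simp only [Finset.sum_empty]
    filter_upwards [Lp.coeFn_zero ℝ 2 P] with ω hω using hω
  | cons i s hi ih =>
    simp only [Finset.sum_cons]
    filter_upwards [Lp.coeFn_add (a i • F i) (∑ j ∈ s, a j • F j),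
      Lp.coeFn_smul (a i) (F i), ih] with ω h1 h2 h3
    rw [h1, Pi.add_apply, h2, h3, Pi.smul_apply, smul_eq_mul]


/-- A process `(f_t)_{t ∈ T}` on a measure space `(Ω, P)` is a centered Gaussian process
if every finite real linear combination `∑ i, c i * f (t i)` is a centered real Gaussian
random variable. -/
def IsCenteredGaussianProcess {Ω T : Type*} [MeasurableSpace Ω]
    (P : Measure Ω) (f : T → Ω → ℝ) : Prop :=
  ∀ (n : ℕ) (t : Fin n → T) (c : Fin n → ℝ), ∃ v : NNReal,
    P.map (fun ω => ∑ i, c i * f (t i) ω) = gaussianReal 0 v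

/-- Conditional mean process for the Proxy setting. If `(h_{(x,w)})` is a centered
Gaussian process with product covariance `E[h_{(x,w)} h_{(x′,w′)}] = k_X(x,x′)·k_W(w,w′)`
and `g_{(x,z)} = ∫ h_{(x,w)} dν_{x,z}(w)`, then `(g_{(x,z)})` is a centered Gaussian
process with covariance
`q((x,z),(x′,z′)) = k_X(x,x′) · ∬ k_W(w,w′) dν_{x,z}(w) dν_{x′,z′}(w′)`. -/
theorem conditional_mean_process_proxy
    {Ω : Type*} [MeasurableSpace Ω] (P : Measure Ω) [IsProbabilityMeasure P]
    {X W Z : Type*} [MeasurableSpace X] [MeasurableSpace W]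
    (h : X × W → Lp ℝ 2 P)
    (hmeas : ∀ x, StronglyMeasurable (fun w => h (x, w)))
    (hGP : IsCenteredGaussianProcess P (fun p => ⇑(h p)))
    (kX : X → X → ℝ) (kW : W → W → ℝ)
    (hcov : ∀ x x' w w', (∫ ω, h (x, w) ω * h (x', w') ω ∂P) = kX x x' * kW w w')
    (ν : X × Z → Measure W) (hfin : ∀ p, IsFiniteMeasure (ν p))
    (hint : ∀ x z, Integrable (fun w => h (x, w)) (ν (x, z)))
    (g : X × Z → Lp ℝ 2 P) (hg : ∀ x z, g (x, z) = ∫ w, h (x, w) ∂(ν (x, z))) :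
    IsCenteredGaussianProcess P (fun p => ⇑(g p)) ∧
    ∀ x z x' z', (∫ ω, g (x, z) ω * g (x', z') ω ∂P)
      = kX x x' * ∫ w', ∫ w, kW w w' ∂(ν (x, z)) ∂(ν (x', z')) := by
  have inner_eq : ∀ f1 f2 : Lp ℝ 2 P, ⟪f1, f2⟫ = ∫ ω, f1 ω * f2 ω ∂P := by
    intro f1 f2
    rw [L2.inner_def]
    exact integral_congr_ae (Eventually.of_forall fun ω => by simp [RCLike.inner_apply]; ring)
  constructor
  · -- Gaussianity
    intro n t c
    set V := (Submodule.span ℝ (Set.range h)).topologicalClosure with hV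
    have hspan_gauss : ∀ f ∈ Submodule.span ℝ (Set.range h),
        ∃ v : ℝ≥0, P.map ⇑f = gaussianReal 0 v := by
      intro f hf
      obtain ⟨m, a, gs, hsum⟩ := Submodule.mem_span_set'.1 hf
      choose p hp using fun i => (gs i).2
      obtain ⟨v, hv⟩ := hGP m p a
      refine ⟨v, ?_⟩
      rw [← hv]
      refine Measure.map_congr ?_
      have hfeq : f = ∑ i, a i • h (p i) := by
        rw [← hsum]
        exact Finset.sum_congr rfl fun i _ => by rw [hp i]
      rw [hfeq]
      exact coeFn_sum_smul Finset.univ a (fun i => h (p i))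
    have hVg : ∀ f ∈ V, ∃ v : ℝ≥0, P.map ⇑f = gaussianReal 0 v := by
      intro f hf
      have hmem : (f : Lp ℝ 2 P) ∈ closure ((Submodule.span ℝ (Set.range h) : Submodule ℝ _)
          : Set (Lp ℝ 2 P)) := hf
      obtain ⟨u, hu_mem, hu_tend⟩ := mem_closure_iff_seq_limit.1 hmem
      exact gaussian_of_tendsto u f (fun k => hspan_gauss _ (hu_mem k)) hu_tend
    have hgV : ∀ q : X × Z, g q ∈ V := by
      intro q
      have hq : g q = ∫ w, h (q.1, w) ∂(ν (q.1, q.2)) := hg q.1 q.2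
      rw [hq, hV, ← Submodule.orthogonal_orthogonal_eq_closure]
      rw [Submodule.mem_orthogonal]
      intro y hy
      rw [← integral_inner (hint q.1 q.2) y]
      have hzero : ∀ w, ⟪y, h (q.1, w)⟫ = (0:ℝ) := by
        intro w
        rw [real_inner_comm]
        exact (Submodule.mem_orthogonal _ y).1 hy (h (q.1, w))
          (Submodule.subset_span ⟨(q.1, w), rfl⟩)
      simp_rw [hzero]
      exact integral_zero _ _
    have hSV : (∑ i, c i • g (t i)) ∈ V :=
      Submodule.sum_mem V (fun i _ => Submodule.smul_mem V _ (hgV (t i)))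
    obtain ⟨v, hv⟩ := hVg _ hSV
    refine ⟨v, ?_⟩
    rw [← hv]
    exact Measure.map_congr (coeFn_sum_smul Finset.univ c (fun i => g (t i))).symm
  · -- covariance
    intro x z x' z'
    rw [← inner_eq, hg x z, hg x' z',
      ← integral_inner (hint x' z') (∫ w, h (x, w) ∂(ν (x, z)))]
    have hin : ∀ w', ⟪∫ w, h (x, w) ∂(ν (x, z)), h (x', w')⟫
        = kX x x' * ∫ w, kW w w' ∂(ν (x, z)) := by
      intro w'
      rw [real_inner_comm, ← integral_inner (hint x z) (h (x', w'))]
      have hker : ∀ w, ⟪h (x', w'), h (x, w)⟫ = kX x x' * kW w w' := by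
        intro w
        rw [real_inner_comm, inner_eq, hcov]
      simp_rw [hker]
      rw [integral_const_mul]
    simp_rw [hin]
    rw [integral_const_mul]
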